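/- arXiv:1505.04536 — 8 statements merged into one kernel-verified Lean document; each statement's English description precedes it below -/
import Mathlib

section
/- Let $0<q_{\rm red}<1$, $C_{\rm stab}, C_{\rm red}>0$, and $0<\theta\le 1$. Suppose nonnegative reals $\eta_\ell(T)$, $\eta_\star(T)$ indexed by finite sets $\mathcal T_\ell$, $\mathcal T_\star$ and a distance $\delta\ge0$ satisfy: (stability) $|\eta_\star(\mathcal T_\ell\cap\mathcal T_\star)-\eta_\ell(\mathcal T_\ell\cap\mathcal T_\star)|\le C_{\rm stab}\,\delta$ where $\eta(\mathcal U):=(\sum_{T\in\mathcal U}\eta(T)^2)^{1/2}$; (reduction) $\eta_\star(\mathcal T_\star\setminus\mathcal T_\ell)^2\le q_{\rm red}\,\eta_\ell(\mathcal T_\ell\setminus\mathcal T_\star)^2+C_{\rm red}\,\delta^2$; and (Dörfler marking) $\theta\,\eta_\ell(\mathcal T_\ell)^2\le \eta_\ell(\mathcal T_\ell\setminus\mathcal T_\star)^2$. Then there exist constants $0<q_{\rm est}<1$ and $C_{\rm est}>0$, depending only on $q_{\rm red}$, $C_{\rm stab}$, $C_{\rm red}$, and $\theta$, such that $\eta_\star(\mathcal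 T_\star)^2\le q_{\rm est}\,\eta_\ell(\mathcal T_\ell)^2 + C_{\rm est}\,\delta^2$. Specifically, for sufficiently small $\delta'>0$ one may take $q_{\rm est}=(1+\delta')-(1+\delta'-q_{\rm red})\theta$ and $C_{\rm est}=C_{\rm stab}^2(1+1/\delta')+C_{\rm red}$. -/
/-- Generalized estimator reduction (Lemma 3.3). -/
theorem stmt_0 {α : Type*} [DecidableEq α] (Tl Ts : Finset α)
    (ηl ηs : α → ℝ) (hηl : ∀ T, 0 ≤ ηl T) (hηs : ∀ T, 0 ≤ ηs T)
    (δ : ℝ) (hδ : 0 ≤ δ)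
    (qred Cstab Cred θ : ℝ) (hq0 : 0 < qred) (hq1 : qred < 1)
    (hCs : 0 < Cstab) (hCr : 0 < Cred) (hθ0 : 0 < θ) (hθ1 : θ ≤ 1)
    (stab : |Real.sqrt (∑ T ∈ Tl ∩ Ts, ηs T ^ 2) -
        Real.sqrt (∑ T ∈ Tl ∩ Ts, ηl T ^ 2)| ≤ Cstab * δ)
    (red : ∑ T ∈ Ts \ Tl, ηs T ^ 2 ≤ qred * ∑ T ∈ Tl \ Ts, ηl T ^ 2 + Cred * δ ^ 2)
    (mark : θ * ∑ T ∈ Tl, ηl T ^ 2 ≤ ∑ T ∈ Tl \ Ts, ηl T ^ 2) :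
    ∃ δ' > (0 : ℝ),
      (0 < (1 + δ') - (1 + δ' - qred) * θ) ∧ ((1 + δ') - (1 + δ' - qred) * θ < 1) ∧
      ∑ T ∈ Ts, ηs T ^ 2 ≤ ((1 + δ') - (1 + δ' - qred) * θ) * ∑ T ∈ Tl, ηl T ^ 2
        + (Cstab ^ 2 * (1 + 1 / δ') + Cred) * δ ^ 2 := by
  set δ' : ℝ := (1 - qred) * θ / 2 with hδ'def
  have hδ'pos : 0 < δ' := by
    have h := mul_pos (show (0:ℝ) < 1 - qred by linarith) hθ0
    rw [hδ'def]; linarith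
  refine ⟨δ', hδ'pos, ?_, ?_, ?_⟩
  · nlinarith
  · nlinarith
  · set X := ∑ T ∈ Tl ∩ Ts, ηs T ^ 2 with hX
    set Y := ∑ T ∈ Tl ∩ Ts, ηl T ^ 2 with hY
    set B := ∑ T ∈ Tl \ Ts, ηl T ^ 2 with hB
    set Z := ∑ T ∈ Ts \ Tl, ηs T ^ 2 with hZ
    set S := ∑ T ∈ Tl, ηl T ^ 2 with hS
    have hXnn : 0 ≤ X := Finset.sum_nonneg fun T _ => sq_nonneg _
    have hYnn : 0 ≤ Y := Finset.sum_nonneg fun T _ => sq_nonneg _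
    have hsplitL : Y + B = S := Finset.sum_inter_add_sum_sdiff _ _ _
    have hsplitS : ∑ T ∈ Ts, ηs T ^ 2 = X + Z := by
      rw [hX, Finset.inter_comm]
      exact (Finset.sum_inter_add_sum_sdiff _ _ _).symm
    have h1 : Real.sqrt X ≤ Real.sqrt Y + Cstab * δ := by
      have := abs_sub_le_iff.mp stab
      linarith [this.1]
    have hX2 : X ≤ (Real.sqrt Y + Cstab * δ) ^ 2 := by
      have hx : X = (Real.sqrt X) ^ 2 := (Real.sq_sqrt hXnn).symm
      rw [hx]
      have h0 : 0 ≤ Real.sqrt X := Real.sqrt_nonneg _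
      nlinarith [Real.sqrt_nonneg Y, mul_nonneg hCs.le hδ]
    have hyoung : (Real.sqrt Y + Cstab * δ) ^ 2 ≤
        (1 + δ') * Y + (1 + 1 / δ') * (Cstab * δ) ^ 2 := by
      have hsy : Real.sqrt Y ^ 2 = Y := Real.sq_sqrt hYnn
      have hinv2 : δ' * (1 / δ' * (Cstab * δ) ^ 2) = (Cstab * δ) ^ 2 := by
        field_simp
      have key' : δ' * (2 * (Real.sqrt Y * (Cstab * δ))) ≤
          δ' * (δ' * Real.sqrt Y ^ 2 + 1 / δ' * (Cstab * δ) ^ 2) := by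
        nlinarith [sq_nonneg (δ' * Real.sqrt Y - Cstab * δ), hinv2]
      have key := le_of_mul_le_mul_left key' hδ'pos
      nlinarith [key, hsy]
    have h1δq : (0:ℝ) ≤ 1 + δ' - qred := by linarith
    have hXb : X ≤ (1 + δ') * Y + (1 + 1 / δ') * (Cstab ^ 2 * δ ^ 2) := by
      have hd : (Cstab * δ) ^ 2 = Cstab ^ 2 * δ ^ 2 := by ring
      rw [← hd]; exact hX2.trans hyoung
    rw [hsplitS]
    calc X + Z ≤ ((1 + δ') * Y + (1 + 1 / δ') * (Cstab ^ 2 * δ ^ 2))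
          + (qred * B + Cred * δ ^ 2) := add_le_add hXb red
      _ = (1 + δ') * S - (1 + δ' - qred) * B
          + (Cstab ^ 2 * (1 + 1 / δ') + Cred) * δ ^ 2 := by rw [← hsplitL]; ring
      _ ≤ (1 + δ') * S - (1 + δ' - qred) * (θ * S)
          + (Cstab ^ 2 * (1 + 1 / δ') + Cred) * δ ^ 2 := by
        have := mul_le_mul_of_nonneg_left mark h1δq
        linarith
      _ = ((1 + δ') - (1 + δ' - qred) * θ) * S
          + (Cstab ^ 2 * (1 + 1 / δ') + Cred) * δ ^ 2 := by ring
end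

section
/- Let $(a_j)_{j\ge 0}$ be nonnegative reals, $0<q_{\rm est}<1$, $C_{\rm est}>0$, and $(d_j)_{j\ge0}$ nonnegative reals satisfying: (i) $a_{j+1} \le q_{\rm est}\, a_j + C_{\rm est}\, d_j$ for all $j$; and (ii) for every $\varepsilon>0$ there exists $C_{\rm orth}(\varepsilon)>0$ such that $\sum_{j=n}^{N}(d_j - \varepsilon a_j) \le C_{\rm orth}(\varepsilon)\, a_n$ for all $n\le N$. Then there exist $C_{\rm lin}>0$ and $0<q_{\rm lin}<1$, depending only on $q_{\rm est}$, $C_{\rm est}$, and $C_{\rm orth}(\cdot)$, such that $a_{n+k} \le C_{\rm lin}\, q_{\rm lin}^{k}\, a_n$ for all $n,k\in\mathbb N_0$. -/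
/-- Generalized linear convergence (Proposition 3.4), abstract form. -/
theorem stmt_2 (a d : ℕ → ℝ) (ha : ∀ j, 0 ≤ a j) (hd : ∀ j, 0 ≤ d j)
    (qest Cest : ℝ) (hq0 : 0 < qest) (hq1 : qest < 1) (hC : 0 < Cest)
    (hred : ∀ j, a (j + 1) ≤ qest * a j + Cest * d j)
    (horth : ∀ ε : ℝ, 0 < ε → ∃ Corth : ℝ, 0 < Corth ∧
      ∀ n N : ℕ, n ≤ N → ∑ j ∈ Finset.Icc n N, (d j - ε * a j) ≤ Corth * a n) :
    ∃ Clin qlin : ℝ, 0 < Clin ∧ 0 < qlin ∧ qlin < 1 ∧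
      ∀ n k : ℕ, a (n + k) ≤ Clin * qlin ^ k * a n := by
  set ε : ℝ := (1 - qest) / (2 * Cest) with hε
  have hεpos : 0 < ε := by
    apply div_pos <;> linarith
  obtain ⟨Corth, hCorth, horth'⟩ := horth ε hεpos
  have hCε : Cest * ε = (1 - qest) / 2 := by
    field_simp [hε]
    rw [hε]; field_simp
  set M : ℝ := max ((1 + Cest * Corth) / ((1 - qest) / 2)) 2 with hM
  have hM2 : (2 : ℝ) ≤ M := le_max_right _ _
  have hMpos : 0 < M := by linarith
  -- uniform summability: ∑_{j=n}^N a j ≤ M * a n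
  have hS : ∀ n N : ℕ, ∑ j ∈ Finset.Icc n N, a j ≤ M * a n := by
    intro n N
    by_cases hnN : n ≤ N
    · set S : ℝ := ∑ j ∈ Finset.Icc n N, a j with hSdef
      have hSnn : 0 ≤ S := Finset.sum_nonneg fun j _ => ha j
      -- shifted sum
      have hshift : ∑ j ∈ Finset.Icc n N, a (j + 1)
          = ∑ j ∈ Finset.Icc (n + 1) (N + 1), a j := by
        rw [← Finset.map_add_right_Icc n N 1, Finset.sum_map]
        rfl
      have h2 : S ≤ a n + ∑ j ∈ Finset.Icc n N, a (j + 1) := by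
        rw [hshift, hSdef, Finset.Icc_eq_cons_Ioc hnN, Finset.sum_cons]
        have hsub : Finset.Ioc n N ⊆ Finset.Icc (n + 1) (N + 1) := by
          rw [← Finset.Icc_add_one_left_eq_Ioc]
          exact Finset.Icc_subset_Icc_right (Nat.le_succ N)
        have := Finset.sum_le_sum_of_subset_of_nonneg hsub
          (fun j _ _ => ha j)
        linarith
      have h3 : ∑ j ∈ Finset.Icc n N, d j ≤ ε * S + Corth * a n := by
        have := horth' n N hnN
        rw [Finset.sum_sub_distrib, ← Finset.mul_sum] at this
        linarith
      have h4 : ∑ j ∈ Finset.Icc n N, a (j + 1)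
          ≤ qest * S + Cest * ∑ j ∈ Finset.Icc n N, d j := by
        rw [hSdef, Finset.mul_sum, Finset.mul_sum, ← Finset.sum_add_distrib]
        exact Finset.sum_le_sum fun j _ => hred j
      have hdnn : 0 ≤ ∑ j ∈ Finset.Icc n N, d j :=
        Finset.sum_nonneg fun j _ => hd j
      -- combine: S ≤ a n + qest S + Cest ε S + Cest Corth a n
      have hcomb : ((1 - qest) / 2) * S ≤ (1 + Cest * Corth) * a n := by
        nlinarith [mul_le_mul_of_nonneg_left h3 hC.le]
      have hM1 : (1 + Cest * Corth) / ((1 - qest) / 2) ≤ M := le_max_left _ _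
      have hκ : (0 : ℝ) < (1 - qest) / 2 := by linarith
      have : S ≤ (1 + Cest * Corth) / ((1 - qest) / 2) * a n := by
        rw [div_mul_eq_mul_div, le_div_iff₀ hκ]
        linarith [hcomb]
      calc S ≤ (1 + Cest * Corth) / ((1 - qest) / 2) * a n := this
        _ ≤ M * a n := mul_le_mul_of_nonneg_right hM1 (ha n)
    · rw [Finset.Icc_eq_empty hnN, Finset.sum_empty]
      exact mul_nonneg hMpos.le (ha n)
  set q : ℝ := 1 - 1 / M with hq
  have hq01 : 0 < q := by
    have : 1 / M ≤ 1 / 2 := by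
      apply one_div_le_one_div_of_le <;> linarith
    simp only [hq]; linarith
  have hq1' : q < 1 := by
    have : 0 < 1 / M := by positivity
    simp only [hq]; linarith
  -- one-step decay of tails
  have hstep : ∀ m N : ℕ, ∑ j ∈ Finset.Icc (m + 1) N, a j
      ≤ q * ∑ j ∈ Finset.Icc m N, a j := by
    intro m N
    by_cases hmN : m ≤ N
    · have hsplit : ∑ j ∈ Finset.Icc m N, a j
          = a m + ∑ j ∈ Finset.Icc (m + 1) N, a j := by
        rw [Finset.Icc_eq_cons_Ioc hmN, Finset.sum_cons, Finset.Icc_add_one_left_eq_Ioc]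
      have hSam : ∑ j ∈ Finset.Icc m N, a j ≤ M * a m := hS m N
      have ham : (1 / M) * ∑ j ∈ Finset.Icc m N, a j ≤ a m := by
        rw [div_mul_eq_mul_div, one_mul, div_le_iff₀ hMpos]
        linarith [hSam, mul_comm (a m) M]
      simp only [hq]
      nlinarith [hsplit, ham]
    · rw [Finset.Icc_eq_empty (fun h => hmN (le_trans (Nat.le_succ m) h)),
        Finset.sum_empty]
      exact mul_nonneg hq01.le (Finset.sum_nonneg fun j _ => ha j)
  -- iterate
  have hdec : ∀ k n N : ℕ, ∑ j ∈ Finset.Icc (n + k) N, a j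
      ≤ q ^ k * (M * a n) := by
    intro k
    induction k with
    | zero => intro n N; simpa only [Nat.add_zero, pow_zero, one_mul] using hS n N
    | succ k ih =>
      intro n N
      have h1 : ∑ j ∈ Finset.Icc (n + (k + 1)) N, a j
          ≤ q * ∑ j ∈ Finset.Icc (n + k) N, a j := by
        have h := hstep (n + k) N
        rw [Nat.add_succ]
        exact h
      calc ∑ j ∈ Finset.Icc (n + (k + 1)) N, a j
          ≤ q * ∑ j ∈ Finset.Icc (n + k) N, a j := h1
        _ ≤ q * (q ^ k * (M * a n)) :=
            mul_le_mul_of_nonneg_left (ih n N) hq01.le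
        _ = q ^ (k + 1) * (M * a n) := by ring
  refine ⟨M, q, hMpos, hq01, hq1', fun n k => ?_⟩
  have := hdec k n (n + k)
  rw [Finset.Icc_self, Finset.sum_singleton] at this
  linarith [this]
end

section
/- Let $\mathcal T_\ell$ be a finite set, $\eta_u,\eta_z:\mathcal T_\ell\to\mathbb R_{\ge0}$, and set $E_u^2=\sum_{T\in\mathcal T_\ell}\eta_u(T)^2$, $E_z^2=\sum_{T\in\mathcal T_\ell}\eta_z(T)^2$, and $\rho(T)^2:=\eta_u(T)^2 E_z^2+E_u^2\eta_z(T)^2$. If a subset $\mathcal M\subseteq\mathcal T_\ell$ satisfies the combined Dörfler marking $\theta\sum_{T\in\mathcal T_\ell}\rho(T)^2 \le \sum_{T\in\mathcal M}\rho(T)^2$ for some $0<\theta\le1$, then $\theta\, E_u^2 \le \sum_{T\in\mathcal M}\eta_u(T)^2$ or $\theta\, E_z^2 \le \sum_{T\in\mathcal M}\eta_z(T)^2$, i.e., the set $\mathcal M$ satisfies the separate Dörfler marking for at least one of the two estimators. -/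
/-- Combined Dörfler marking implies separate Dörfler marking for one estimator. -/
theorem stmt_4 {α : Type*} (Tl : Finset α) (ηu ηz : α → ℝ)
    (hηu : ∀ T, 0 ≤ ηu T) (hηz : ∀ T, 0 ≤ ηz T)
    (θ : ℝ) (hθ0 : 0 < θ) (hθ1 : θ ≤ 1)
    (M : Finset α) (hM : M ⊆ Tl)
    (hmark : θ * ∑ T ∈ Tl, (ηu T ^ 2 * (∑ S ∈ Tl, ηz S ^ 2) + (∑ S ∈ Tl, ηu S ^ 2) * ηz T ^ 2)
      ≤ ∑ T ∈ M, (ηu T ^ 2 * (∑ S ∈ Tl, ηz S ^ 2) + (∑ S ∈ Tl, ηu S ^ 2) * ηz T ^ 2)) :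
    θ * ∑ T ∈ Tl, ηu T ^ 2 ≤ ∑ T ∈ M, ηu T ^ 2 ∨
    θ * ∑ T ∈ Tl, ηz T ^ 2 ≤ ∑ T ∈ M, ηz T ^ 2 := by
  set A := ∑ T ∈ Tl, ηu T ^ 2 with hA
  set B := ∑ T ∈ Tl, ηz T ^ 2 with hB
  set a := ∑ T ∈ M, ηu T ^ 2 with ha
  set b := ∑ T ∈ M, ηz T ^ 2 with hb
  have hA0 : 0 ≤ A := Finset.sum_nonneg fun i _ => sq_nonneg _
  have hB0 : 0 ≤ B := Finset.sum_nonneg fun i _ => sq_nonneg _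
  have ha0 : 0 ≤ a := Finset.sum_nonneg fun i _ => sq_nonneg _
  have hb0 : 0 ≤ b := Finset.sum_nonneg fun i _ => sq_nonneg _
  have key : θ * (2 * (A * B)) ≤ a * B + A * b := by
    have h1 : ∑ T ∈ Tl, (ηu T ^ 2 * B + A * ηz T ^ 2) = 2 * (A * B) := by
      rw [Finset.sum_add_distrib, ← Finset.sum_mul, ← Finset.mul_sum]; ring
    have h2 : ∑ T ∈ M, (ηu T ^ 2 * B + A * ηz T ^ 2) = a * B + A * b := by
      rw [Finset.sum_add_distrib, ← Finset.sum_mul, ← Finset.mul_sum]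
    rw [← h1, ← h2]; exact hmark
  rcases eq_or_lt_of_le hA0 with hAz | hAp
  · left; rw [← hAz]; simpa using ha0
  rcases eq_or_lt_of_le hB0 with hBz | hBp
  · right; rw [← hBz]; simpa using hb0
  by_contra hcon
  push_neg at hcon
  obtain ⟨h1, h2⟩ := hcon
  have : a * B + A * b < θ * (2 * (A * B)) := by nlinarith
  linarith
end

section
/- Conversely to the previous statement: let $0<\theta\le 1$ and suppose a subset $\mathcal R\subseteq\mathcal T_\ell$ satisfies $2\theta\,E_u^2\le\sum_{T\in\mathcal R}\eta_u(T)^2$ or $2\theta\,E_z^2\le\sum_{T\in\mathcal R}\eta_z(T)^2$, where $E_u^2=\sum_{T\in\mathcal T_\ell}\eta_u(T)^2$ and $E_z^2=\sum_{T\in\mathcal T_\ell}\eta_z(T)^2$. Then with $\rho(T)^2:=\eta_u(T)^2E_z^2+E_u^2\eta_z(T)^2$ it holds $\theta\sum_{T\in\mathcal T_\ell}\rho(T)^2 \le \sum_{T\in\mathcal R}\rho(T)^2$, i.e., the separate Dörfler marking with parameter $2\theta$ for one estimator implies the combined Dörfler marking with parameter $\theta$. -/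
/-- Separate Dörfler marking with parameter 2θ implies combined Dörfler marking with θ. -/
theorem stmt_5 {α : Type*} (Tl : Finset α) (ηu ηz : α → ℝ)
    (hηu : ∀ T, 0 ≤ ηu T) (hηz : ∀ T, 0 ≤ ηz T)
    (θ : ℝ) (hθ0 : 0 < θ) (hθ1 : θ ≤ 1)
    (R : Finset α) (hR : R ⊆ Tl)
    (hsep : 2 * θ * ∑ T ∈ Tl, ηu T ^ 2 ≤ ∑ T ∈ R, ηu T ^ 2 ∨
      2 * θ * ∑ T ∈ Tl, ηz T ^ 2 ≤ ∑ T ∈ R, ηz T ^ 2) :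
    θ * ∑ T ∈ Tl, (ηu T ^ 2 * (∑ S ∈ Tl, ηz S ^ 2) + (∑ S ∈ Tl, ηu S ^ 2) * ηz T ^ 2)
      ≤ ∑ T ∈ R, (ηu T ^ 2 * (∑ S ∈ Tl, ηz S ^ 2) + (∑ S ∈ Tl, ηu S ^ 2) * ηz T ^ 2) := by
  set Eu := ∑ S ∈ Tl, ηu S ^ 2 with hEu
  set Ez := ∑ S ∈ Tl, ηz S ^ 2 with hEz
  have hEu0 : 0 ≤ Eu := Finset.sum_nonneg fun i _ => sq_nonneg _
  have hEz0 : 0 ≤ Ez := Finset.sum_nonneg fun i _ => sq_nonneg _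
  have htot : ∑ T ∈ Tl, (ηu T ^ 2 * Ez + Eu * ηz T ^ 2) = 2 * (Eu * Ez) := by
    rw [Finset.sum_add_distrib, ← Finset.sum_mul, ← Finset.mul_sum, ← hEu, ← hEz]
    ring
  rw [htot, Finset.sum_add_distrib, ← Finset.sum_mul, ← Finset.mul_sum]
  rcases hsep with h | h
  · have h1 : θ * (2 * (Eu * Ez)) ≤ (∑ T ∈ R, ηu T ^ 2) * Ez := by
      have := mul_le_mul_of_nonneg_right h hEz0
      nlinarith
    have h2 : 0 ≤ Eu * ∑ T ∈ R, ηz T ^ 2 :=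
      mul_nonneg hEu0 (Finset.sum_nonneg fun i _ => sq_nonneg _)
    linarith
  · have h1 : θ * (2 * (Eu * Ez)) ≤ Eu * ∑ T ∈ R, ηz T ^ 2 := by
      have := mul_le_mul_of_nonneg_right h hEu0
      nlinarith
    have h2 : 0 ≤ (∑ T ∈ R, ηu T ^ 2) * Ez :=
      mul_nonneg (Finset.sum_nonneg fun i _ => sq_nonneg _) hEz0
    linarith
end

section
/- Let $(b_\ell)_{\ell\ge0}$ and $(m_\ell)_{\ell\ge0}$ be positive reals and $(N_\ell)_{\ell\ge0}$ nonnegative reals. Suppose: (i) linear convergence $b_\ell\le C_{\rm lin} q_{\rm lin}^{\ell-j} b_j$ for all $j\le\ell$ with $C_{\rm lin}>0$, $0<q_{\rm lin}<1$; (ii) a mesh-closure estimate $N_\ell \le C_{\rm nvb}\sum_{j=0}^{\ell-1} m_j$ with $C_{\rm nvb}>0$; and (iii) a cardinality bound $m_j \le C_1\, (C_2\, A)^{1/r}\, b_j^{-1/r}$ for all $j$, with constants $C_1,C_2,A>0$ and rate $r>0$. Then $b_\ell \le \Big(\frac{C_{\rm nvb} C_1}{1-q_{\rm lin}^{1/r}}\Big)^{r}\,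 C_{\rm lin}\, C_2\, A\, N_\ell^{-r}$ for all $\ell$ with $N_\ell>0$. -/
/-- Final step in the proof of optimal convergence rates (Theorem 3.1). -/
theorem stmt_7 (b m : ℕ → ℝ) (N : ℕ → ℝ) (hb : ∀ ℓ, 0 < b ℓ) (hm : ∀ ℓ, 0 < m ℓ)
    (hN : ∀ ℓ, 0 ≤ N ℓ)
    (Clin qlin Cnvb C1 C2 A r : ℝ)
    (hClin : 0 < Clin) (hq0 : 0 < qlin) (hq1 : qlin < 1) (hCnvb : 0 < Cnvb)
    (hC1 : 0 < C1) (hC2 : 0 < C2) (hA : 0 < A) (hr : 0 < r)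
    (hlin : ∀ j ℓ : ℕ, j ≤ ℓ → b ℓ ≤ Clin * qlin ^ (ℓ - j) * b j)
    (hclosure : ∀ ℓ : ℕ, N ℓ ≤ Cnvb * ∑ j ∈ Finset.range ℓ, m j)
    (hcard : ∀ j : ℕ, m j ≤ C1 * (C2 * A) ^ (1 / r) * (b j) ^ (-(1 / r))) :
    ∀ ℓ : ℕ, 0 < N ℓ →
      b ℓ ≤ (Cnvb * C1 / (1 - qlin ^ (1 / r))) ^ r * Clin * C2 * A * (N ℓ) ^ (-r) := by
  intro ℓ hNℓ
  have hs : (0:ℝ) < 1 / r := by positivity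
  set s : ℝ := 1 / r with hsdef
  set Q : ℝ := qlin ^ s with hQdef
  have hQ0 : 0 < Q := Real.rpow_pos_of_pos hq0 s
  have hQ1 : Q < 1 := Real.rpow_lt_one hq0.le hq1 hs
  have h1Q : 0 < 1 - Q := by linarith
  -- key pointwise bound
  have key : ∀ j, j ≤ ℓ → (b j) ^ (-s) ≤ Clin ^ s * Q ^ (ℓ - j) * (b ℓ) ^ (-s) := by
    intro j hj
    have hbl := hb ℓ; have hbj := hb j
    have h2 : (b ℓ) ^ s ≤ (Clin * qlin ^ (ℓ - j) * b j) ^ s :=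
      Real.rpow_le_rpow hbl.le (hlin j ℓ hj) hs.le
    have h3 : (Clin * qlin ^ (ℓ - j) * b j) ^ s = Clin ^ s * Q ^ (ℓ - j) * (b j) ^ s := by
      rw [Real.mul_rpow (by positivity) hbj.le, Real.mul_rpow hClin.le (by positivity),
        ← Real.rpow_natCast qlin (ℓ - j), ← Real.rpow_mul hq0.le,
        mul_comm ((ℓ - j : ℕ) : ℝ) s, Real.rpow_mul hq0.le, Real.rpow_natCast]
    rw [h3] at h2
    have hbjs : 0 < (b j) ^ s := Real.rpow_pos_of_pos hbj s
    have hbls : 0 < (b ℓ) ^ s := Real.rpow_pos_of_pos hbl s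
    rw [Real.rpow_neg hbj.le, Real.rpow_neg hbl.le, ← one_div, ← one_div, mul_one_div,
      div_le_div_iff₀ hbjs hbls, one_mul]
    nlinarith [hbjs, hbls]
  -- geometric sum bound
  have hsum : ∑ j ∈ Finset.range ℓ, Q ^ (ℓ - j) ≤ 1 / (1 - Q) := by
    have h1 : ∑ j ∈ Finset.range ℓ, Q ^ (ℓ - j) ≤ ∑ j ∈ Finset.range ℓ, Q ^ j := by
      rw [← Finset.sum_range_reflect (fun j => Q ^ (ℓ - j)) ℓ]
      apply Finset.sum_le_sum
      intro i hi
      have hi' : i < ℓ := Finset.mem_range.mp hi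
      have : ℓ - (ℓ - 1 - i) = i + 1 := by omega
      rw [this, pow_succ]
      nlinarith [pow_pos hQ0 i, pow_nonneg hQ0.le i]
    have h2 : ∑ j ∈ Finset.range ℓ, Q ^ j ≤ 1 / (1 - Q) := by
      rw [geom_sum_eq hQ1.ne ℓ]
      have heq : (Q ^ ℓ - 1) / (Q - 1) = (1 - Q ^ ℓ) / (1 - Q) := by
        rw [div_eq_div_iff (sub_ne_zero.mpr hQ1.ne) h1Q.ne']; ring
      rw [heq, div_le_div_iff₀ h1Q h1Q]
      have : (0:ℝ) ≤ Q ^ ℓ := pow_nonneg hQ0.le ℓ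
      nlinarith
    linarith
  -- combine
  have hD : N ℓ ≤ (Cnvb * C1 / (1 - Q)) * (Clin * (C2 * A)) ^ s * (b ℓ) ^ (-s) := by
    have hbls : 0 < (b ℓ) ^ (-s) := Real.rpow_pos_of_pos (hb ℓ) _
    have step1 : N ℓ ≤ Cnvb * ∑ j ∈ Finset.range ℓ, m j := hclosure ℓ
    have step2 : ∑ j ∈ Finset.range ℓ, m j
        ≤ ∑ j ∈ Finset.range ℓ, C1 * (C2 * A) ^ s * (Clin ^ s * Q ^ (ℓ - j) * (b ℓ) ^ (-s)) := by
      apply Finset.sum_le_sum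
      intro j hj
      have hj' := Finset.mem_range.mp hj
      calc m j ≤ C1 * (C2 * A) ^ s * (b j) ^ (-s) := hcard j
        _ ≤ C1 * (C2 * A) ^ s * (Clin ^ s * Q ^ (ℓ - j) * (b ℓ) ^ (-s)) := by
            have := key j hj'.le
            have hpos : (0:ℝ) ≤ C1 * (C2 * A) ^ s := by positivity
            exact mul_le_mul_of_nonneg_left this hpos
    have step3 : ∑ j ∈ Finset.range ℓ, C1 * (C2 * A) ^ s * (Clin ^ s * Q ^ (ℓ - j) * (b ℓ) ^ (-s))
        = C1 * (C2 * A) ^ s * Clin ^ s * (b ℓ) ^ (-s) * ∑ j ∈ Finset.range ℓ, Q ^ (ℓ - j) := by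
      rw [Finset.mul_sum]; apply Finset.sum_congr rfl; intro j _; ring
    have hCm : (Clin * (C2 * A)) ^ s = Clin ^ s * (C2 * A) ^ s :=
      Real.mul_rpow hClin.le (by positivity)
    have hterm : 0 ≤ C1 * (C2 * A) ^ s * Clin ^ s * (b ℓ) ^ (-s) := by positivity
    calc N ℓ ≤ Cnvb * ∑ j ∈ Finset.range ℓ, m j := step1
      _ ≤ Cnvb * (C1 * (C2 * A) ^ s * Clin ^ s * (b ℓ) ^ (-s) * ∑ j ∈ Finset.range ℓ, Q ^ (ℓ - j)) := by
          rw [← step3]; exact mul_le_mul_of_nonneg_left step2 hCnvb.le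
      _ ≤ Cnvb * (C1 * (C2 * A) ^ s * Clin ^ s * (b ℓ) ^ (-s) * (1 / (1 - Q))) := by
          apply mul_le_mul_of_nonneg_left _ hCnvb.le
          exact mul_le_mul_of_nonneg_left hsum hterm
      _ = (Cnvb * C1 / (1 - Q)) * (Clin * (C2 * A)) ^ s * (b ℓ) ^ (-s) := by
          rw [hCm]; field_simp
  -- raise to power r
  have hDpos : 0 < (Cnvb * C1 / (1 - Q)) * (Clin * (C2 * A)) ^ s := by positivity
  have hNr : (N ℓ) ^ r ≤ ((Cnvb * C1 / (1 - Q)) * (Clin * (C2 * A)) ^ s) ^ r * (b ℓ) ^ ((-s) * r) := by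
    have := Real.rpow_le_rpow hNℓ.le hD hr.le
    rwa [Real.mul_rpow hDpos.le (Real.rpow_pos_of_pos (hb ℓ) (-s)).le,
      ← Real.rpow_mul (hb ℓ).le] at this
  have hsr : (-s) * r = -1 := by
    rw [hsdef]; field_simp
  rw [hsr, Real.rpow_neg_one] at hNr
  have hK : ((Cnvb * C1 / (1 - Q)) * (Clin * (C2 * A)) ^ s) ^ r
      = (Cnvb * C1 / (1 - Q)) ^ r * (Clin * C2 * A) := by
    rw [Real.mul_rpow (by positivity) (by positivity), ← Real.rpow_mul (by positivity)]
    rw [hsdef, one_div_mul_cancel hr.ne', Real.rpow_one, mul_assoc]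
  rw [hK] at hNr
  -- conclude
  have hNr' : 0 < (N ℓ) ^ r := Real.rpow_pos_of_pos hNℓ r
  rw [Real.rpow_neg hNℓ.le]
  have hbℓ := hb ℓ
  have h : b ℓ * (N ℓ) ^ r ≤ (Cnvb * C1 / (1 - Q)) ^ r * (Clin * C2 * A) := by
    have h1 := mul_le_mul_of_nonneg_left hNr hbℓ.le
    have heq : b ℓ * ((Cnvb * C1 / (1 - Q)) ^ r * (Clin * C2 * A) * (b ℓ)⁻¹)
        = (Cnvb * C1 / (1 - Q)) ^ r * (Clin * C2 * A) := by
      field_simp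
    rwa [heq] at h1
  calc b ℓ = b ℓ * (N ℓ) ^ r * ((N ℓ) ^ r)⁻¹ := by field_simp
    _ ≤ (Cnvb * C1 / (1 - Q)) ^ r * (Clin * C2 * A) * ((N ℓ) ^ r)⁻¹ :=
        mul_le_mul_of_nonneg_right h (by positivity)
    _ = (Cnvb * C1 / (1 - Q)) ^ r * Clin * C2 * A * ((N ℓ) ^ r)⁻¹ := by ring
end

section
/- Let $(a_j)$, $(D_j)$ be nonnegative real sequences, $\delta\in(0,1)$, $C_{\rm rel}>0$, $C_{\rm mon}\ge1$, and $j_\delta\in\mathbb N$. Assume: (i) $d_j \le \frac{1}{1-\delta}D_j - D_{j+1}$ for all $j\ge j_\delta$, where $(d_j)$ are nonnegative reals; (ii) $D_j \le C_{\rm rel}^2\, a_j$ for all $j$; (iii) $d_j \le C_{\rm rel}^2\, a_j$ for all $j$ (from the triangle-type bound $d_j\le D_j$ plus (ii), or directly); (iv) quasi-monotonicity $a_j \le C_{\rm mon}\, a_n$ for all $j\ge n$. Set $\varepsilon:=C_{\rm rel}^2(\frac{1}{1-\delta}-1)$. Then for all $n\le N$: $\sum_{j=n}^{N}\big(d_j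 - \varepsilon\, a_j\big) \le (1+j_\delta)\,C_{\rm rel}^2\, C_{\rm mon}\, a_n$. -/
/-- Verification of the quasi-orthogonality axiom (A3), abstract form (eq. (4.7)). -/
theorem stmt_14 (a D d : ℕ → ℝ) (ha : ∀ j, 0 ≤ a j) (hD : ∀ j, 0 ≤ D j) (hd : ∀ j, 0 ≤ d j)
    (δ Crel Cmon : ℝ) (hδ0 : 0 < δ) (hδ1 : δ < 1) (hCrel : 0 < Crel) (hCmon : 1 ≤ Cmon)
    (jδ : ℕ)
    (h1 : ∀ j ≥ jδ, d j ≤ (1 / (1 - δ)) * D j - D (j + 1))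
    (h2 : ∀ j, D j ≤ Crel ^ 2 * a j)
    (h3 : ∀ j, d j ≤ Crel ^ 2 * a j)
    (h4 : ∀ n j : ℕ, n ≤ j → a j ≤ Cmon * a n) :
    ∀ n N : ℕ, n ≤ N →
      ∑ j ∈ Finset.Icc n N, (d j - Crel ^ 2 * (1 / (1 - δ) - 1) * a j)
        ≤ (1 + (jδ : ℝ)) * Crel ^ 2 * Cmon * a n := by
  intro n N hnN
  set ε := Crel ^ 2 * (1 / (1 - δ) - 1) with hεdef
  have h1δ : (0:ℝ) < 1 - δ := by linarith
  have hfrac : (1:ℝ) ≤ 1 / (1 - δ) := by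
    rw [le_div_iff₀ h1δ]; linarith
  have hεnn : 0 ≤ ε := by
    apply mul_nonneg (by positivity); linarith
  have key : ∀ j, jδ ≤ j → d j - ε * a j ≤ D j - D (j + 1) := by
    intro j hj
    have hh := h1 j hj
    have h2j := h2 j
    have hm : (1 / (1 - δ) - 1) * D j ≤ (1 / (1 - δ) - 1) * (Crel ^ 2 * a j) :=
      mul_le_mul_of_nonneg_left h2j (by linarith)
    have : ε * a j = (1 / (1 - δ) - 1) * (Crel ^ 2 * a j) := by rw [hεdef]; ring
    nlinarith
  have tel : ∀ m, jδ ≤ m → ∀ M, m ≤ M →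
      ∑ j ∈ Finset.Icc m M, (d j - ε * a j) ≤ D m - D (M + 1) := by
    intro m hm M hmM
    induction M, hmM using Nat.le_induction with
    | base =>
      rw [Finset.Icc_self, Finset.sum_singleton]
      exact key m hm
    | succ M hM ih =>
      rw [Finset.sum_Icc_succ_top (le_trans hM (Nat.le_succ M))]
      have := key (M + 1) (le_trans hm (le_trans hM (Nat.le_succ M)))
      linarith
  set C := Crel ^ 2 * Cmon * a n with hCdef
  have hC : 0 ≤ C := by
    apply mul_nonneg (mul_nonneg (by positivity) (by linarith)) (ha n)
  have hsplit := Finset.sum_filter_add_sum_filter_not (Finset.Icc n N)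
    (fun j => j < jδ) (fun j => d j - ε * a j)
  have hbound1 : ∑ j ∈ (Finset.Icc n N).filter (fun j => j < jδ), (d j - ε * a j)
      ≤ (jδ : ℝ) * C := by
    have hcard : ((Finset.Icc n N).filter (fun j => j < jδ)).card ≤ jδ := by
      have hsub : (Finset.Icc n N).filter (fun j => j < jδ) ⊆ Finset.range jδ := by
        intro j hj
        simp only [Finset.mem_filter, Finset.mem_Icc] at hj
        exact Finset.mem_range.mpr hj.2
      simpa using Finset.card_le_card hsub
    have hterm : ∀ j ∈ (Finset.Icc n N).filter (fun j => j < jδ), d j - ε * a j ≤ C := by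
      intro j hj
      simp only [Finset.mem_filter, Finset.mem_Icc] at hj
      have h3j := h3 j
      have h4j := h4 n j hj.1.1
      have : Crel ^ 2 * a j ≤ C := by
        rw [hCdef]
        have := mul_le_mul_of_nonneg_left h4j (by positivity : (0:ℝ) ≤ Crel ^ 2)
        linarith
      nlinarith [mul_nonneg hεnn (ha j)]
    calc ∑ j ∈ (Finset.Icc n N).filter (fun j => j < jδ), (d j - ε * a j)
        ≤ ((Finset.Icc n N).filter (fun j => j < jδ)).card • C :=
          Finset.sum_le_card_nsmul _ _ _ hterm
      _ = (((Finset.Icc n N).filter (fun j => j < jδ)).card : ℝ) * C := by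
          rw [nsmul_eq_mul]
      _ ≤ (jδ : ℝ) * C := by
          apply mul_le_mul_of_nonneg_right _ hC
          exact_mod_cast hcard
  have hfilter2 : (Finset.Icc n N).filter (fun j => ¬ j < jδ) = Finset.Icc (max n jδ) N := by
    ext j
    simp only [Finset.mem_filter, Finset.mem_Icc, not_lt, max_le_iff]
    omega
  have hbound2 : ∑ j ∈ (Finset.Icc n N).filter (fun j => ¬ j < jδ), (d j - ε * a j) ≤ C := by
    rw [hfilter2]
    by_cases hle : max n jδ ≤ N
    · have htel := tel (max n jδ) (le_max_right n jδ) N hle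
      have h2m := h2 (max n jδ)
      have h4m := h4 n (max n jδ) (le_max_left n jδ)
      have hDm : D (max n jδ) ≤ C := by
        rw [hCdef]
        nlinarith [sq_nonneg Crel]
      have := hD (N + 1)
      linarith
    · rw [Finset.Icc_eq_empty hle, Finset.sum_empty]
      exact hC
  have hfinal : (1 + (jδ : ℝ)) * Crel ^ 2 * Cmon * a n = (jδ : ℝ) * C + C := by
    rw [hCdef]; ring
  rw [hfinal]
  linarith [hsplit, hbound1, hbound2]
end

section
/- Let $\mathcal X$ be a Hilbert space with a continuous bilinear form $a$ with continuity constant $M$. Let $f,g\in\mathcal X^*$, let $u,z\in\mathcal X$ satisfy $a(u,v)=f(v)$ for all $v\in\mathcal X_0$ (a closed subspace), and $a(v,z)=0$ for all $v\in\mathcal X_0$ with $z$ having prescribed trace, and let $U_\star\in\mathcal X_{0,\star}\subseteq\mathcal X_0$ and $Z_\star$ (with the same prescribed trace data, i.e., $z-Z_\star\in\mathcal X_0$) be Galerkin approximations with $a(U_\star,V)=f(V)$ for all $V\in\mathcal X_{0,\star}$ and $a(V,Z_\star)=0$ for all $V\in\mathcal X_{0,\star}$. Define $N_z(u):=a(u,z)-f(z)$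 and $N_{z,\star}(U_\star):=-f(Z_\star)$. Then $|N_z(u)-N_{z,\star}(U_\star)| = |a(u-U_\star, z-Z_\star)| \le M\,\|u-U_\star\|_{\mathcal X}\,\|z-Z_\star\|_{\mathcal X}$. -/
/-- Lemma 5.1: error bound for the weighted boundary flux. -/
theorem stmt_15 {X : Type*} [NormedAddCommGroup X] [InnerProductSpace ℝ X] [CompleteSpace X]
    (a : X →ₗ[ℝ] X →ₗ[ℝ] ℝ) (M : ℝ)
    (hM : ∀ v w : X, |a v w| ≤ M * ‖v‖ * ‖w‖)
    (f : X →ₗ[ℝ] ℝ)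
    (X0 X0s : Submodule ℝ X) (hsub : X0s ≤ X0)
    (u z U Z : X) (hu0 : u ∈ X0)
    (hu : ∀ v ∈ X0, a u v = f v) (hz : ∀ v ∈ X0, a v z = 0)
    (hU : U ∈ X0s) (hZtr : z - Z ∈ X0)
    (hUg : ∀ V ∈ X0s, a U V = f V) (hZg : ∀ V ∈ X0s, a V Z = 0) :
    |(a u z - f z) - (-(f Z))| = |a (u - U) (z - Z)| ∧
    |(a u z - f z) - (-(f Z))| ≤ M * ‖u - U‖ * ‖z - Z‖ := by
  have h1 : a u z = 0 := hz u hu0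
  have h2 : a U z = 0 := hz U (hsub hU)
  have h3 : a U Z = 0 := hZg U hU
  have h4 : a u (z - Z) = f (z - Z) := hu _ hZtr
  simp only [map_sub, LinearMap.sub_apply] at h4 ⊢
  have key : (a u z - f z) - (-(f Z)) = -((a u z - a u Z) - (a U z - a U Z)) := by
    linarith
  constructor
  · rw [key, abs_neg]; congr 1; ring
  · rw [key, abs_neg]
    exact (hM (u - U) (z - Z)).trans_eq' (by simp [map_sub, LinearMap.sub_apply]; ring)
end

section
/- Let $\mathcal T_\ell$, $\mathcal T_\star$ be finite sets with $\eta_\ell,\eta_\star$ as in the stability axiom: $|\eta_\star(\mathcal T_\ell\cap\mathcal T_\star)-\eta_\ell(\mathcal T_\ell\cap\mathcal T_\star)|\le C_{\rm stab}\,\delta$, and suppose discrete reliability $\delta \le C_{\rm rel}\,\eta_\ell(\mathcal R)$ holds for a set $\mathcal R\subseteq\mathcal T_\ell$ with $\mathcal T_\ell\setminus\mathcal T_\star\subseteq\mathcal R$, where $\eta(\mathcal U)=(\sum_{T\in\mathcal U}\eta(T)^2)^{1/2}$ and $\delta\ge0$. Let $0<\theta<\theta_\star:=(1+C_{\rm stab}^2C_{\rm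 rel}^2)^{-1}$ and set $\kappa_\star:=(1-(1+C_{\rm stab}^2C_{\rm rel}^2)\theta)\cdot\lambda$ for suitable $0<\lambda<1$ making $0<\kappa_\star<1$. If $\eta_\star(\mathcal T_\star)^2\le\kappa_\star\,\eta_\ell(\mathcal T_\ell)^2$, then the Dörfler marking $\theta\,\eta_\ell(\mathcal T_\ell)^2\le\eta_\ell(\mathcal R)^2$ holds. -/
/-- Optimality of the Dörfler marking (Lemma 2.15). -/
theorem stmt_19 {α : Type*} [DecidableEq α] (Tl Ts R : Finset α)
    (ηl ηs : α → ℝ) (hηl : ∀ T, 0 ≤ ηl T) (hηs : ∀ T, 0 ≤ ηs T)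
    (δ Cstab Crel θ : ℝ) (hδ : 0 ≤ δ) (hCs : 0 < Cstab) (hCr : 0 < Crel)
    (hR1 : Tl \ Ts ⊆ R) (hR2 : R ⊆ Tl)
    (stab : |Real.sqrt (∑ T ∈ Tl ∩ Ts, ηs T ^ 2) -
        Real.sqrt (∑ T ∈ Tl ∩ Ts, ηl T ^ 2)| ≤ Cstab * δ)
    (rel : δ ≤ Crel * Real.sqrt (∑ T ∈ R, ηl T ^ 2))
    (hθ0 : 0 < θ) (hθ : θ < (1 + Cstab ^ 2 * Crel ^ 2)⁻¹) :
    ∃ lam : ℝ, 0 < lam ∧ lam < 1 ∧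
      (0 < (1 - (1 + Cstab ^ 2 * Crel ^ 2) * θ) * lam ∧
        (1 - (1 + Cstab ^ 2 * Crel ^ 2) * θ) * lam < 1) ∧
      ((∑ T ∈ Ts, ηs T ^ 2 ≤
          (1 - (1 + Cstab ^ 2 * Crel ^ 2) * θ) * lam * ∑ T ∈ Tl, ηl T ^ 2) →
        θ * ∑ T ∈ Tl, ηl T ^ 2 ≤ ∑ T ∈ R, ηl T ^ 2) := by
  set q2 : ℝ := Cstab ^ 2 * Crel ^ 2 with hq2def
  have hq2 : 0 < q2 := by positivity
  have h1q2 : (0:ℝ) < 1 + q2 := by linarith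
  have hc : 0 < 1 - (1 + q2) * θ := by
    have h1 := mul_lt_mul_of_pos_left hθ h1q2
    have h2 : (1 + q2) * (1 + q2)⁻¹ = 1 := mul_inv_cancel₀ h1q2.ne'
    linarith
  set c : ℝ := 1 - (1 + q2) * θ with hcdef
  have hc1 : c < 1 := by
    have : 0 < (1 + q2) * θ := by positivity
    simp only [hcdef]; linarith
  set ε : ℝ := 2 * θ * q2 / c with hεdef
  have hε : 0 < ε := by positivity
  have hεc : ε * c = 2 * θ * q2 := div_mul_cancel₀ _ hc.ne'
  clear_value q2 c ε
  refine ⟨1 / (2 * (1 + ε)), by positivity, ?_, ⟨by positivity, ?_⟩, ?_⟩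
  · rw [div_lt_one (by positivity)]; linarith
  · have h2 : (1:ℝ) < 2 * (1 + ε) := by linarith
    rw [mul_one_div, div_lt_one (by positivity)]
    linarith
  · intro h
    set S := ∑ T ∈ Tl ∩ Ts, ηs T ^ 2 with hSdef
    set A := ∑ T ∈ Tl ∩ Ts, ηl T ^ 2 with hAdef
    set B := ∑ T ∈ Tl \ Ts, ηl T ^ 2 with hBdef
    set ρ := ∑ T ∈ R, ηl T ^ 2 with hρdef
    have hS0 : 0 ≤ S := Finset.sum_nonneg fun i _ => sq_nonneg _
    have hA0 : 0 ≤ A := Finset.sum_nonneg fun i _ => sq_nonneg _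
    have hρ0 : 0 ≤ ρ := Finset.sum_nonneg fun i _ => sq_nonneg _
    have hAB : A + B = ∑ T ∈ Tl, ηl T ^ 2 := Finset.sum_inter_add_sum_sdiff Tl Ts _
    have hBρ : B ≤ ρ :=
      Finset.sum_le_sum_of_subset_of_nonneg hR1 fun i _ _ => sq_nonneg _
    have hSS : S ≤ ∑ T ∈ Ts, ηs T ^ 2 :=
      Finset.sum_le_sum_of_subset_of_nonneg Finset.inter_subset_right
        fun i _ _ => sq_nonneg _
    -- sqrt estimate
    have hsqrt : Real.sqrt A ≤ Real.sqrt S + Cstab * Crel * Real.sqrt ρ := by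
      have h1 := (abs_le.mp stab).1
      have h2 : Cstab * δ ≤ Cstab * (Crel * Real.sqrt ρ) :=
        mul_le_mul_of_nonneg_left rel hCs.le
      linarith
    have hAle : A ≤ (Real.sqrt S + Cstab * Crel * Real.sqrt ρ) ^ 2 := by
      calc A = Real.sqrt A ^ 2 := (Real.sq_sqrt hA0).symm
        _ ≤ (Real.sqrt S + Cstab * Crel * Real.sqrt ρ) ^ 2 :=
          pow_le_pow_left₀ (Real.sqrt_nonneg _) hsqrt 2
    have hsS := Real.sq_sqrt hS0
    have hsρ := Real.sq_sqrt hρ0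
    -- Young's inequality, multiplied through by ε
    have hYoung : ε * A ≤ ε * (1 + ε) * S + (1 + ε) * q2 * ρ := by
      have key : ε * (1 + ε) * S + (1 + ε) * q2 * ρ -
          ε * ((Real.sqrt S + Cstab * Crel * Real.sqrt ρ) ^ 2) =
          (ε * Real.sqrt S - Cstab * Crel * Real.sqrt ρ) ^ 2 := by
        linear_combination (-(ε * (1 + ε))) * hsS +
          (-((1 + ε) * Cstab ^ 2 * Crel ^ 2)) * hsρ + ((1 + ε) * ρ) * hq2def
      have m1 := mul_le_mul_of_nonneg_left hAle hε.le
      linarith [sq_nonneg (ε * Real.sqrt S - Cstab * Crel * Real.sqrt ρ), key, m1]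
    rw [← hAB] at h ⊢
    have hS2 : (1 + ε) * S ≤ c / 2 * (A + B) := by
      have h12 : (1 + ε) * (1 / (2 * (1 + ε))) = 1 / 2 := by
        field_simp
      have hS2' : (1 + ε) * S ≤ (1 + ε) * (c * (1 / (2 * (1 + ε))) * (A + B)) :=
        mul_le_mul_of_nonneg_left (le_trans hSS h) (by linarith)
      have heq : (1 + ε) * (c * (1 / (2 * (1 + ε))) * (A + B)) = c / 2 * (A + B) := by
        linear_combination c * (A + B) * h12
      linarith
    have hE : ε * (1 - c / 2) * (A + B) ≤ ((1 + ε) * q2 + ε) * ρ := by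
      have m1 := mul_le_mul_of_nonneg_left hS2 hε.le
      have m2 := mul_le_mul_of_nonneg_left hBρ hε.le
      linarith [hYoung, m1, m2]
    have hid : θ * ((1 + ε) * q2 + ε) = ε * (1 - c / 2) := by
      linear_combination (-1/2 : ℝ) * hεc + ε * hcdef
    have h2c : 0 < ε * (1 - c / 2) := by
      have : 1 - c / 2 > 0 := by linarith
      positivity
    have hfin : ε * (1 - c / 2) * (θ * (A + B)) ≤ ε * (1 - c / 2) * ρ := by
      calc ε * (1 - c / 2) * (θ * (A + B)) = θ * (ε * (1 - c / 2) * (A + B)) := by ring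
        _ ≤ θ * (((1 + ε) * q2 + ε) * ρ) := mul_le_mul_of_nonneg_left hE hθ0.le
        _ = ε * (1 - c / 2) * ρ := by rw [← mul_assoc, hid]
    exact le_of_mul_le_mul_left hfin h2c
end
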